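/- For every n ≥ 4, there exists an ideal I of ℂ[z₁,…,zₙ] generated by three homogeneous polynomials of degree n − 2 such that the homogeneous maximal ideal 𝔪 = ⟨z₁,…,zₙ⟩ is an associated prime of the module ℂ[z₁,…,zₙ]/I; equivalently, there exists a polynomial g ∉ I with I : ⟨g⟩ = 𝔪. -/

import Mathlib

open MvPolynomial

namespace Bruns14

variable {σ : Type*} [DecidableEq σ]

/-- The third generator. -/
noncomputable def F2 (a b : σ) (m : ℕ) (e : Fin m → σ) : MvPolynomial σ ℂ :=
  ∑ i : Fin m, X a ^ (m - 1 - i.1) * X b ^ i.1 * X (e i)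

/-- The socle element. -/
noncomputable def G (a b : σ) (m : ℕ) : MvPolynomial σ ℂ :=
  X a ^ (m - 1) * X b ^ (m - 1)

/-- The distinguished monomial exponent. -/
noncomputable def MU (a b : σ) (m : ℕ) : σ →₀ ℕ :=
  Finsupp.single a (m - 1) + Finsupp.single b (m - 1)

/-- The ideal. -/
noncomputable def II (a b : σ) (m : ℕ) (e : Fin m → σ) : Ideal (MvPolynomial σ ℂ) :=
  Ideal.span {X a ^ m, X b ^ m, F2 a b m e}

lemma f0_mem (a b : σ) (m : ℕ) (e : Fin m → σ) : X a ^ m ∈ II a b m e :=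
  Ideal.subset_span (by simp)

lemma f1_mem (a b : σ) (m : ℕ) (e : Fin m → σ) : X b ^ m ∈ II a b m e :=
  Ideal.subset_span (by simp)

lemma f2_mem (a b : σ) (m : ℕ) (e : Fin m → σ) : F2 a b m e ∈ II a b m e :=
  Ideal.subset_span (by simp)

lemma G_eq_monomial (a b : σ) (m : ℕ) (hab : a ≠ b) :
    G a b m = monomial (MU a b m) 1 := by
  rw [G, MU, X_pow_eq_monomial, X_pow_eq_monomial, monomial_mul, one_mul]

lemma Xa_mul_G_mem (a b : σ) (m : ℕ) (hm : 1 ≤ m) (e : Fin m → σ) :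
    X a * G a b m ∈ II a b m e := by
  have hx : X a ^ (m - 1) * X a = (X a : MvPolynomial σ ℂ) ^ m := by
    rw [← pow_succ]; congr 1; omega
  have : X a * G a b m = X b ^ (m - 1) * X a ^ m := by
    rw [← hx, G]; ring
  rw [this]
  exact Ideal.mul_mem_left _ _ (f0_mem a b m e)

lemma Xb_mul_G_mem (a b : σ) (m : ℕ) (hm : 1 ≤ m) (e : Fin m → σ) :
    X b * G a b m ∈ II a b m e := by
  have hx : X b ^ (m - 1) * X b = (X b : MvPolynomial σ ℂ) ^ m := by
    rw [← pow_succ]; congr 1; omega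
  have : X b * G a b m = X a ^ (m - 1) * X b ^ m := by
    rw [← hx, G]; ring
  rw [this]
  exact Ideal.mul_mem_left _ _ (f1_mem a b m e)

lemma Xe_mul_G_mem (a b : σ) (m : ℕ) (e : Fin m → σ) (k : Fin m) :
    X (e k) * G a b m ∈ II a b m e := by
  set t : Fin m → MvPolynomial σ ℂ :=
    fun i => X a ^ (m - 1 - i.1) * X b ^ i.1 * X (e i) with ht
  set q : MvPolynomial σ ℂ := X a ^ k.1 * X b ^ (m - 1 - k.1) with hq
  have hsplit : q * F2 a b m e = q * t k + ∑ i ∈ Finset.univ.erase k, q * t i := by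
    rw [F2, Finset.mul_sum, ← Finset.add_sum_erase _ _ (Finset.mem_univ k)]
  have hqtk : q * t k = X (e k) * G a b m := by
    have e1 : k.1 + (m - 1 - k.1) = m - 1 := by omega
    have e2 : (m - 1 - k.1) + k.1 = m - 1 := by omega
    calc q * t k
        = X a ^ (k.1 + (m - 1 - k.1)) * X b ^ ((m - 1 - k.1) + k.1) * X (e k) := by
          rw [hq, ht, pow_add, pow_add]; ring
      _ = X a ^ (m - 1) * X b ^ (m - 1) * X (e k) := by rw [e1, e2]
      _ = X (e k) * G a b m := by rw [G]; ring
  have hmain : X (e k) * G a b m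
      = q * F2 a b m e - ∑ i ∈ Finset.univ.erase k, q * t i := by
    rw [hsplit, hqtk]; ring
  rw [hmain]
  refine sub_mem (Ideal.mul_mem_left _ _ (f2_mem a b m e)) (Ideal.sum_mem _ ?_)
  intro i hi
  have hik : i ≠ k := (Finset.mem_erase.mp hi).1
  rcases Nat.lt_or_ge i.1 k.1 with hlt | hge
  · -- i < k : multiple of X a ^ m
    have key : q * t i
        = (X a ^ (k.1 - i.1 - 1) * X b ^ ((m - 1 - k.1) + i.1) * X (e i)) * X a ^ m := by
      have e1 : k.1 + (m - 1 - i.1) = (k.1 - i.1 - 1) + m := by omega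
      calc q * t i
          = X a ^ (k.1 + (m - 1 - i.1)) * X b ^ ((m - 1 - k.1) + i.1) * X (e i) := by
            rw [hq, ht, pow_add, pow_add]; ring
        _ = X a ^ ((k.1 - i.1 - 1) + m) * X b ^ ((m - 1 - k.1) + i.1) * X (e i) := by rw [e1]
        _ = _ := by rw [pow_add]; ring
    rw [key]
    exact Ideal.mul_mem_left _ _ (f0_mem a b m e)
  · -- k ≤ i, so k < i : multiple of X b ^ m
    have hki : k.1 < i.1 := by
      rcases Nat.lt_or_ge k.1 i.1 with h | h
      · exact h
      · exact absurd (Fin.ext (by omega)) hik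
    have key : q * t i
        = (X a ^ (k.1 + (m - 1 - i.1)) * X b ^ (i.1 - k.1 - 1) * X (e i)) * X b ^ m := by
      have e1 : (m - 1 - k.1) + i.1 = (i.1 - k.1 - 1) + m := by omega
      calc q * t i
          = X a ^ (k.1 + (m - 1 - i.1)) * X b ^ ((m - 1 - k.1) + i.1) * X (e i) := by
            rw [hq, ht, pow_add, pow_add]; ring
        _ = X a ^ (k.1 + (m - 1 - i.1)) * X b ^ ((i.1 - k.1 - 1) + m) * X (e i) := by rw [e1]
        _ = _ := by rw [pow_add]; ring
    rw [key]
    exact Ideal.mul_mem_left _ _ (f1_mem a b m e)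

lemma coeff_MU_mul_f0 (a b : σ) (m : ℕ) (hm : 1 ≤ m) (hab : a ≠ b)
    (p : MvPolynomial σ ℂ) : coeff (MU a b m) (p * X a ^ m) = 0 := by
  rw [X_pow_eq_monomial, coeff_mul_monomial', if_neg]
  intro hle
  have := hle a
  simp [MU, Finsupp.single_apply, hab, Ne.symm hab] at this
  omega

lemma coeff_MU_mul_f1 (a b : σ) (m : ℕ) (hm : 1 ≤ m) (hab : a ≠ b)
    (p : MvPolynomial σ ℂ) : coeff (MU a b m) (p * X b ^ m) = 0 := by
  rw [X_pow_eq_monomial, coeff_mul_monomial', if_neg]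
  intro hle
  have := hle b
  simp [MU, Finsupp.single_apply, hab, Ne.symm hab] at this
  omega

lemma coeff_MU_mul_f2 (a b : σ) (m : ℕ) (e : Fin m → σ)
    (hea : ∀ i, e i ≠ a) (heb : ∀ i, e i ≠ b)
    (p : MvPolynomial σ ℂ) : coeff (MU a b m) (p * F2 a b m e) = 0 := by
  rw [F2, Finset.mul_sum, coeff_sum]
  refine Finset.sum_eq_zero fun i _ => ?_
  have hterm : X a ^ (m - 1 - i.1) * X b ^ i.1 * X (e i)
      = monomial (Finsupp.single a (m - 1 - i.1) + Finsupp.single b i.1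
          + Finsupp.single (e i) 1) (1 : ℂ) := by
    rw [X_pow_eq_monomial, X_pow_eq_monomial, ← pow_one (X (e i)), X_pow_eq_monomial,
      monomial_mul, monomial_mul, one_mul, one_mul]
  rw [hterm, coeff_mul_monomial', if_neg]
  intro hle
  have h1 : a ≠ e i := Ne.symm (hea i)
  have h2 : b ≠ e i := Ne.symm (heb i)
  have h3 := hle (e i)
  simp only [MU, Finsupp.add_apply, Finsupp.single_apply, if_neg h1, if_neg h2,
    if_pos (rfl : e i = e i), eq_self_iff_true, if_true] at h3
  omega

lemma coeff_MU_of_mem (a b : σ) (m : ℕ) (hm : 1 ≤ m) (e : Fin m → σ)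
    (hab : a ≠ b) (hea : ∀ i, e i ≠ a) (heb : ∀ i, e i ≠ b)
    {q : MvPolynomial σ ℂ} (hq : q ∈ II a b m e) : coeff (MU a b m) q = 0 := by
  let K : Ideal (MvPolynomial σ ℂ) :=
    { carrier := {q | ∀ p : MvPolynomial σ ℂ, coeff (MU a b m) (p * q) = 0}
      zero_mem' := by intro p; simp
      add_mem' := by
        intro x y hx hy p
        rw [mul_add, coeff_add, hx p, hy p, add_zero]
      smul_mem' := by
        intro c x hx p
        rw [smul_eq_mul, ← mul_assoc]
        exact hx (p * c) }
  have hIK : II a b m e ≤ K := by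
    rw [II, Ideal.span_le]
    rintro x (rfl | rfl | rfl)
    · exact fun p => coeff_MU_mul_f0 a b m hm hab p
    · exact fun p => coeff_MU_mul_f1 a b m hm hab p
    · exact fun p => coeff_MU_mul_f2 a b m e hea heb p
  simpa using (hIK hq) 1

lemma G_not_mem (a b : σ) (m : ℕ) (hm : 1 ≤ m) (e : Fin m → σ)
    (hab : a ≠ b) (hea : ∀ i, e i ≠ a) (heb : ∀ i, e i ≠ b) :
    G a b m ∉ II a b m e := by
  intro h
  have h0 := coeff_MU_of_mem a b m hm e hab hea heb h
  rw [G_eq_monomial a b m hab, coeff_monomial, if_pos rfl] at h0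
  exact one_ne_zero h0

lemma mul_G_mem_imp (a b : σ) (m : ℕ) (hm : 1 ≤ m) (e : Fin m → σ)
    (hab : a ≠ b) (hea : ∀ i, e i ≠ a) (heb : ∀ i, e i ≠ b)
    {p : MvPolynomial σ ℂ} (hp : p * G a b m ∈ II a b m e) :
    constantCoeff p = 0 := by
  have h0 := coeff_MU_of_mem a b m hm e hab hea heb hp
  rw [G_eq_monomial a b m hab, coeff_mul_monomial', if_pos le_rfl, tsub_self, mul_one] at h0
  rwa [constantCoeff_eq]

/-- Membership in the ideal generated by the variables. -/
lemma mem_span_X_iff (p : MvPolynomial σ ℂ) :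
    p ∈ Ideal.span (Set.range (X : σ → MvPolynomial σ ℂ)) ↔ constantCoeff p = 0 := by
  constructor
  · intro hp
    refine Submodule.span_induction ?_ ?_ ?_ ?_ hp
    · rintro x ⟨i, rfl⟩; simp
    · simp
    · intro x y _ _ hx hy; rw [map_add, hx, hy, add_zero]
    · intro c x _ hx
      rw [smul_eq_mul, map_mul, hx, mul_zero]
  · intro hp
    rw [as_sum p]
    refine Ideal.sum_mem _ fun v hv => ?_
    have hv0 : v ≠ 0 := by
      rintro rfl
      rw [mem_support_iff, ← constantCoeff_eq] at hv
      exact hv hp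
    obtain ⟨j, hj⟩ : ∃ j, v j ≠ 0 := by
      by_contra h
      push_neg at h
      exact hv0 (Finsupp.ext fun s => h s)
    have hdecomp : monomial v (coeff v p)
        = X j * monomial (v - Finsupp.single j 1) (coeff v p) := by
      have hle : Finsupp.single j 1 ≤ v := Finsupp.single_le_iff.mpr (by omega)
      have hv : Finsupp.single j 1 + (v - Finsupp.single j 1) = v := add_tsub_cancel_of_le hle
      rw [← pow_one (X j : MvPolynomial σ ℂ), X_pow_eq_monomial, monomial_mul, one_mul, hv]
    rw [hdecomp]
    exact Ideal.mul_mem_right _ _ (Ideal.subset_span ⟨j, rfl⟩)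

lemma span_X_eq_ker :
    Ideal.span (Set.range (X : σ → MvPolynomial σ ℂ))
      = RingHom.ker (constantCoeff : MvPolynomial σ ℂ →+* ℂ) := by
  ext q
  rw [mem_span_X_iff, RingHom.mem_ker]

lemma span_X_isPrime :
    (Ideal.span (Set.range (X : σ → MvPolynomial σ ℂ))).IsPrime := by
  rw [span_X_eq_ker]
  exact RingHom.ker_isPrime _

end Bruns14

open Bruns14 in
/-- Bruns' theorem applied to the Koszul complex of `𝔪`.
For every `n ≥ 4` there is an ideal `I` of `ℂ[z₁,…,zₙ]` generated by three homogeneous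
polynomials of degree `n − 2` such that `𝔪 = ⟨z₁,…,zₙ⟩` is an associated prime of
`ℂ[z₁,…,zₙ]/I`; equivalently there is a `g ∉ I` with `I : ⟨g⟩ = 𝔪`. -/
theorem three_generated_with_maximal_associated_prime (n : ℕ) (hn : 4 ≤ n) :
    ∃ f : Fin 3 → MvPolynomial (Fin n) ℂ,
      (∀ k, (f k).IsHomogeneous (n - 2)) ∧
      Ideal.span (Set.range (X : Fin n → MvPolynomial (Fin n) ℂ)) ∈
        associatedPrimes (MvPolynomial (Fin n) ℂ)
          (MvPolynomial (Fin n) ℂ ⧸ Ideal.span (Set.range f)) ∧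
      ∃ g : MvPolynomial (Fin n) ℂ, g ∉ Ideal.span (Set.range f) ∧
        Submodule.colon (Ideal.span (Set.range f)) (Ideal.span {g}) =
          Ideal.span (Set.range (X : Fin n → MvPolynomial (Fin n) ℂ)) := by
  set m : ℕ := n - 2 with hm
  have hm2 : 2 ≤ m := by omega
  set a : Fin n := ⟨0, by omega⟩ with ha
  set b : Fin n := ⟨1, by omega⟩ with hb
  set e : Fin m → Fin n := fun i => ⟨i.1 + 2, by omega⟩ with he
  have ha0 : (a : ℕ) = 0 := rfl
  have hb1 : (b : ℕ) = 1 := rfl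
  have he2 : ∀ i : Fin m, (e i : ℕ) = i.1 + 2 := fun i => rfl
  have hab : a ≠ b := by simp [ha, hb, Fin.ext_iff]
  have hea : ∀ i, e i ≠ a := by intro i; simp [ha, he, Fin.ext_iff]
  have heb : ∀ i, e i ≠ b := by intro i; simp [hb, he, Fin.ext_iff]
  set f : Fin 3 → MvPolynomial (Fin n) ℂ := ![X a ^ m, X b ^ m, F2 a b m e] with hf
  have hrange : Set.range f = {X a ^ m, X b ^ m, F2 a b m e} := by
    ext q
    constructor
    · rintro ⟨k, rfl⟩
      fin_cases k <;> simp [hf]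
    · rintro (rfl | rfl | rfl)
      exacts [⟨0, rfl⟩, ⟨1, rfl⟩, ⟨2, rfl⟩]
  have hspan : Ideal.span (Set.range f) = II a b m e := by rw [hrange, II]
  -- every variable multiplies G into the ideal
  have hvar : ∀ j : Fin n, X j * G a b m ∈ II a b m e := by
    intro j
    rcases Nat.lt_or_ge j.1 2 with hj | hj
    · rcases Nat.lt_or_ge j.1 1 with hj0 | hj1
      · have : j = a := Fin.ext (by omega)
        rw [this]
        exact Xa_mul_G_mem a b m (by omega) e
      · have : j = b := Fin.ext (by omega)
        rw [this]
        exact Xb_mul_G_mem a b m (by omega) e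
    · have hjm : j.1 - 2 < m := by omega
      have hval : ((⟨j.1 - 2, hjm⟩ : Fin m) : ℕ) = j.1 - 2 := rfl
      have : j = e ⟨j.1 - 2, hjm⟩ := Fin.ext (by rw [he2, hval]; omega)
      rw [this]
      exact Xe_mul_G_mem a b m e _
  -- p * G ∈ I ↔ p ∈ span X
  have hcolon_iff : ∀ p : MvPolynomial (Fin n) ℂ,
      p * G a b m ∈ II a b m e ↔
        p ∈ Ideal.span (Set.range (X : Fin n → MvPolynomial (Fin n) ℂ)) := by
    intro p
    constructor
    · intro hp
      rw [mem_span_X_iff]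
      exact mul_G_mem_imp a b m (by omega) e hab hea heb hp
    · intro hp
      refine Submodule.span_induction ?_ ?_ ?_ ?_ hp
      · rintro x ⟨j, rfl⟩
        exact hvar j
      · simp
      · intro x y _ _ hx hy
        rw [add_mul]
        exact add_mem hx hy
      · intro c x _ hx
        rw [smul_eq_mul, mul_assoc]
        exact Ideal.mul_mem_left _ _ hx
  refine ⟨f, ?_, ?_, ?_⟩
  · -- homogeneity
    intro k
    fin_cases k
    · simpa [hf] using isHomogeneous_X_pow (R := ℂ) a m
    · simpa [hf] using isHomogeneous_X_pow (R := ℂ) b m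
    · show (F2 a b m e).IsHomogeneous m
      rw [F2]
      refine IsHomogeneous.sum _ _ _ fun i _ => ?_
      have hdeg : (m - 1 - i.1) + i.1 + 1 = m := by have := i.2; omega
      have h := ((isHomogeneous_X_pow (R := ℂ) a (m - 1 - i.1)).mul
        (isHomogeneous_X_pow (R := ℂ) b i.1)).mul (isHomogeneous_X ℂ (e i))
      rwa [hdeg] at h
  · -- associated prime
    rw [hspan]
    refine ⟨span_X_isPrime, ⟨Ideal.Quotient.mk (II a b m e) (G a b m), ?_⟩⟩
    rw [← (span_X_isPrime (σ := Fin n)).radical]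
    congr 1
    ext p
    rw [Submodule.mem_colon_singleton, Submodule.mem_bot]
    have hsm : p • Ideal.Quotient.mk (II a b m e) (G a b m)
        = Ideal.Quotient.mk (II a b m e) (p * G a b m) := by
      rw [← smul_eq_mul, ← Ideal.Quotient.mk_eq_mk, ← Ideal.Quotient.mk_eq_mk,
        Submodule.Quotient.mk_smul]
    rw [hsm, Ideal.Quotient.eq_zero_iff_mem, hcolon_iff p]
  · -- the witness g
    refine ⟨G a b m, ?_, ?_⟩
    · rw [hspan]
      exact G_not_mem a b m (by omega) e hab hea heb
    · ext p
      rw [Ideal.mem_colon_span_singleton, hspan]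
      exact hcolon_iff p
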